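/- On the Oeljeklaus–Toma Lie algebra g_OT with complex structure J x_i = y_i, J z_1 = z_2, the forms θ = Σ_i x^i and Ω = 2Σ_i x^i∧y^i + Σ_{i≠j} x^i∧y^j + z^1∧z^2 satisfy dθ = 0 and dΩ = θ∧Ω. -/
import Mathlib


set_option maxHeartbeats 3200000 in
/-- On the Oeljeklaus–Toma Lie algebra `g_OT` the forms `θ = Σᵢ xⁱ` and
`Ω = 2Σᵢ xⁱ∧yⁱ + Σ_{i≠j} xⁱ∧yʲ + z¹∧z²` satisfy `dθ = 0` and `dΩ = θ ∧ Ω`. -/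
theorem stmt16 (n : ℕ) (c : Fin n → ℝ)
    (L : Type*) [LieRing L] [LieAlgebra ℝ L]
    (x y : Fin n → L) (z : Fin 2 → L)
    (hli : LinearIndependent ℝ (Sum.elim x (Sum.elim y z)))
    (hspan : ⊤ ≤ Submodule.span ℝ (Set.range (Sum.elim x (Sum.elim y z))))
    (hxy : ∀ i j, ⁅x i, y j⁆ = if i = j then y i else 0)
    (hxx : ∀ i j, ⁅x i, x j⁆ = 0) (hyy : ∀ i j, ⁅y i, y j⁆ = 0)
    (hyz : ∀ i k, ⁅y i, z k⁆ = 0)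
    (hxz1 : ∀ i, ⁅x i, z 0⁆ = -((1 / 2 : ℝ) • z 0) + c i • z 1)
    (hxz2 : ∀ i, ⁅x i, z 1⁆ = -(c i • z 0) - (1 / 2 : ℝ) • z 1)
    (hzz : ⁅z 0, z 1⁆ = 0)
    (θ : L →ₗ[ℝ] ℝ)
    (hθx : ∀ i, θ (x i) = 1) (hθy : ∀ i, θ (y i) = 0) (hθz : ∀ k, θ (z k) = 0)
    (Ω : L →ₗ[ℝ] L →ₗ[ℝ] ℝ) (halt : ∀ u v : L, Ω u v = - Ω v u)
    (hΩxy : ∀ i j, Ω (x i) (y j) = if i = j then 2 else 1)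
    (hΩxx : ∀ i j, Ω (x i) (x j) = 0) (hΩyy : ∀ i j, Ω (y i) (y j) = 0)
    (hΩxz : ∀ i k, Ω (x i) (z k) = 0) (hΩyz : ∀ i k, Ω (y i) (z k) = 0)
    (hΩzz : Ω (z 0) (z 1) = 1) :
    (∀ u v : L, θ ⁅u, v⁆ = 0) ∧
    (∀ u v w : L, -Ω ⁅u, v⁆ w + Ω ⁅u, w⁆ v - Ω ⁅v, w⁆ u
        = θ u * Ω v w - θ v * Ω u w + θ w * Ω u v) := by
  have hspan' : ∀ m : L, m ∈ Submodule.span ℝ (Set.range (Sum.elim x (Sum.elim y z))) :=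
    fun m => hspan trivial
  have hyx : ∀ i j, ⁅y i, x j⁆ = -(if j = i then y j else 0) := fun i j => by
    rw [← lie_skew, hxy]
  have hzx0 : ∀ i, ⁅z 0, x i⁆ = -(-((1 / 2 : ℝ) • z 0) + c i • z 1) := fun i => by
    rw [← lie_skew, hxz1]
  have hzx1 : ∀ i, ⁅z 1, x i⁆ = -(-(c i • z 0) - (1 / 2 : ℝ) • z 1) := fun i => by
    rw [← lie_skew, hxz2]
  have hzy : ∀ k i, ⁅z k, y i⁆ = 0 := fun k i => by
    rw [← lie_skew, hyz]; simp
  have hzz' : ∀ k l : Fin 2, ⁅z k, z l⁆ = 0 := by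
    intro k l
    fin_cases k <;> fin_cases l <;>
      simp only [Fin.zero_eta, Fin.mk_one, Fin.isValue] <;>
      first
        | exact lie_self _
        | exact hzz
        | (rw [← lie_skew, hzz]; simp)
  have hΩself : ∀ u : L, Ω u u = 0 := fun u => by
    have := halt u u; linarith
  have hΩyx : ∀ i j, Ω (y i) (x j) = -(if j = i then (2:ℝ) else 1) := fun i j => by
    rw [halt, hΩxy]
  have hΩzx : ∀ k i, Ω (z k) (x i) = 0 := fun k i => by rw [halt, hΩxz]; simp
  have hΩzy : ∀ k i, Ω (z k) (y i) = 0 := fun k i => by rw [halt, hΩyz]; simp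
  have hΩ10 : Ω (z 1) (z 0) = -1 := by rw [halt, hΩzz]
  -- Part 1
  have part1 : ∀ u v : L, θ ⁅u, v⁆ = 0 := by
    have leaf1 : ∀ a ∈ Set.range (Sum.elim x (Sum.elim y z)),
        ∀ b ∈ Set.range (Sum.elim x (Sum.elim y z)), θ ⁅a, b⁆ = 0 := by
      rintro _ ⟨a, rfl⟩ _ ⟨b, rfl⟩
      rcases a with ia | ia | ka <;> rcases b with ib | ib | kb <;>
        simp only [Sum.elim_inl, Sum.elim_inr] <;>
        (try fin_cases ka) <;> (try fin_cases kb) <;>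
        simp only [Fin.zero_eta, Fin.mk_one, Fin.isValue, hxy, hxx, hyy, hyz, hxz1, hxz2,
          hyx, hzx0, hzx1, hzy, hzz', map_add, map_smul, map_neg, map_sub, map_zero,
          hθx, hθy, hθz, smul_eq_mul] <;>
        (try split_ifs) <;> norm_num [hθx, hθy, hθz]
    have step1 : ∀ a ∈ Set.range (Sum.elim x (Sum.elim y z)), ∀ v : L, θ ⁅a, v⁆ = 0 := by
      intro a ha v
      induction hspan' v using Submodule.span_induction with
      | mem b hb => exact leaf1 a ha b hb
      | zero => simp
      | add b e hb he ihb ihe => simp only [lie_add, map_add, ihb, ihe, add_zero]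
      | smul r b hb ih => simp only [lie_smul, map_smul, ih, smul_zero]
    intro u v
    induction hspan' u using Submodule.span_induction with
    | mem a ha => exact step1 a ha v
    | zero => simp
    | add a b ha hb iha ihb => simp only [add_lie, map_add, iha, ihb, add_zero]
    | smul r a ha ih => simp only [smul_lie, map_smul, ih, smul_zero]
  refine ⟨part1, ?_⟩
  have leaf2 : ∀ a ∈ Set.range (Sum.elim x (Sum.elim y z)),
      ∀ b ∈ Set.range (Sum.elim x (Sum.elim y z)),
      ∀ e ∈ Set.range (Sum.elim x (Sum.elim y z)),
      -Ω ⁅a, b⁆ e + Ω ⁅a, e⁆ b - Ω ⁅b, e⁆ a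
        = θ a * Ω b e - θ b * Ω a e + θ e * Ω a b := by
    clear hli hspan hspan' halt part1
    rintro _ ⟨a, rfl⟩ _ ⟨b, rfl⟩ _ ⟨e, rfl⟩
    rcases a with ia | ia | ka <;> rcases b with ib | ib | kb <;> rcases e with ie | ie | ke <;>
      simp only [Sum.elim_inl, Sum.elim_inr] <;>
      (try fin_cases ka) <;> (try fin_cases kb) <;> (try fin_cases ke) <;>
      simp only [Fin.zero_eta, Fin.mk_one, Fin.isValue, hxy, hxx, hyy, hyz, hxz1, hxz2,
        hyx, hzx0, hzx1, hzy, hzz', map_add, map_smul, map_neg, map_sub, map_zero,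
        LinearMap.add_apply, LinearMap.smul_apply, LinearMap.neg_apply, LinearMap.sub_apply,
        LinearMap.zero_apply, hθx, hθy, hθz, smul_eq_mul] <;>
      (try split_ifs) <;>
      simp_all only [hΩxy, hΩxx, hΩyy, hΩxz, hΩyz, hΩyx, hΩzx, hΩzy, hΩzz, hΩ10, hΩself,
        map_zero, LinearMap.zero_apply, if_true, if_false, not_true, not_false_iff] <;>
      norm_num
  have step2 : ∀ a ∈ Set.range (Sum.elim x (Sum.elim y z)),
      ∀ b ∈ Set.range (Sum.elim x (Sum.elim y z)), ∀ w : L,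
      -Ω ⁅a, b⁆ w + Ω ⁅a, w⁆ b - Ω ⁅b, w⁆ a
        = θ a * Ω b w - θ b * Ω a w + θ w * Ω a b := by
    intro a ha b hb w
    induction hspan' w using Submodule.span_induction with
    | mem e he => exact leaf2 a ha b hb e he
    | zero => simp
    | add w₁ w₂ h₁ h₂ ih₁ ih₂ =>
        simp only [lie_add, map_add, LinearMap.add_apply]
        linear_combination ih₁ + ih₂
    | smul r w₁ h₁ ih =>
        simp only [lie_smul, map_smul, LinearMap.smul_apply, smul_eq_mul]
        linear_combination r * ih
  have step3 : ∀ a ∈ Set.range (Sum.elim x (Sum.elim y z)), ∀ v w : L,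
      -Ω ⁅a, v⁆ w + Ω ⁅a, w⁆ v - Ω ⁅v, w⁆ a
        = θ a * Ω v w - θ v * Ω a w + θ w * Ω a v := by
    intro a ha v w
    induction hspan' v using Submodule.span_induction with
    | mem b hb => exact step2 a ha b hb w
    | zero => simp
    | add v₁ v₂ h₁ h₂ ih₁ ih₂ =>
        simp only [lie_add, add_lie, map_add, LinearMap.add_apply]
        linear_combination ih₁ + ih₂
    | smul r v₁ h₁ ih =>
        simp only [lie_smul, smul_lie, map_smul, LinearMap.smul_apply, smul_eq_mul]
        linear_combination r * ih
  intro u v w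
  induction hspan' u using Submodule.span_induction with
  | mem a ha => exact step3 a ha v w
  | zero => simp
  | add u₁ u₂ h₁ h₂ ih₁ ih₂ =>
      simp only [add_lie, map_add, LinearMap.add_apply]
      linear_combination ih₁ + ih₂
  | smul r u₁ h₁ ih =>
      simp only [smul_lie, map_smul, LinearMap.smul_apply, smul_eq_mul]
      linear_combination r * ih
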